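/- For a double-broom consisting of a path with n − 2s vertices and s pendant leaves attached at each of its two endpoints (total n vertices, with 1 ≤ s and n − 2s ≥ 2), the total number of subtrees equals 2^{2s} + 2^{s+1}(n − 2s − 1) + C(n−2s−1, 2) + 2s. -/

import Mathlib

open scoped Classical

/-- The subtrees (nonempty connected induced subgraphs) of a graph, as vertex sets. -/
noncomputable def subtrees {V : Type*} [Fintype V] (G : SimpleGraph V) :
    Finset (Finset V) :=
  Finset.univ.filter (fun s => s.Nonempty ∧ (G.induce (s : Set V)).Connected)

/-- The double-broom on `n` vertices: vertices `0,…,n−2s−1` form a path, vertices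
`n−2s,…,n−s−1` are leaves attached to the endpoint `0` of the path, and vertices
`n−s,…,n−1` are leaves attached to the other endpoint `n−2s−1`. -/
def doubleBroom (n s : ℕ) : SimpleGraph (Fin n) :=
  SimpleGraph.fromRel (fun i j =>
    (i.val + 1 = j.val ∧ j.val < n - 2 * s) ∨
    (i.val = 0 ∧ n - 2 * s ≤ j.val ∧ j.val < n - 2 * s + s) ∨
    (i.val = n - 2 * s - 1 ∧ n - 2 * s + s ≤ j.val))

def fIco (n a b : ℕ) : Finset (Fin n) := Finset.univ.filter (fun x => a ≤ x.val ∧ x.val < b)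

@[simp] lemma mem_fIco {n a b : ℕ} {x : Fin n} : x ∈ fIco n a b ↔ a ≤ x.val ∧ x.val < b := by
  simp [fIco]

lemma card_fIco {n a b : ℕ} (h : b ≤ n) : (fIco n a b).card = b - a := by
  classical
  have := Finset.card_bij' (s := fIco n a b) (t := Finset.Ico a b)
    (fun x _ => x.val) (fun k hk => ⟨k, by simp at hk; omega⟩)
    (by intro x hx; simp at hx ⊢; omega)
    (by intro k hk; simp at hk ⊢; omega)
    (by intro x hx; simp)
    (by intro k hk; simp)
  rw [this, Nat.card_Ico]


section
variable {n s m : ℕ}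

lemma dB_adj (hn : n = m + 2 * s) (u v : Fin n) :
    (doubleBroom n s).Adj u v ↔ u.val ≠ v.val ∧
      ((u.val + 1 = v.val ∧ v.val < m) ∨ (v.val + 1 = u.val ∧ u.val < m) ∨
       (u.val = 0 ∧ m ≤ v.val ∧ v.val < m + s) ∨ (v.val = 0 ∧ m ≤ u.val ∧ u.val < m + s) ∨
       (u.val = m - 1 ∧ m + s ≤ v.val) ∨ (v.val = m - 1 ∧ m + s ≤ u.val)) := by
  have hms : n - 2 * s = m := by omega
  rw [doubleBroom, SimpleGraph.fromRel_adj, hms, Fin.ne_iff_vne]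
  omega
end


section
variable {n s m : ℕ}

lemma connected_struct (hm : 2 ≤ m) (hn : n = m + 2 * s)
    (S : Finset (Fin n)) (a b : ℕ) (hab : a ≤ b) (hb : b < m)
    (hpath : ∀ x : Fin n, x.val < m → (x ∈ S ↔ a ≤ x.val ∧ x.val ≤ b))
    (hA : ∀ x : Fin n, m ≤ x.val → x.val < m + s → x ∈ S → a = 0)
    (hB : ∀ x : Fin n, m + s ≤ x.val → x ∈ S → b = m - 1) :
    ((doubleBroom n s).induce (S : Set (Fin n))).Connected := by
  have han : a < n := by omega
  have hrS : (⟨a, han⟩ : Fin n) ∈ S :=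
    (hpath _ (show a < m by omega)).2 ⟨le_refl _, hab⟩
  have key : ∀ k (h1 : a ≤ k) (h2 : k ≤ b) (hkn : k < n)
      (hmem : (⟨k, hkn⟩ : Fin n) ∈ S),
      ((doubleBroom n s).induce (S : Set (Fin n))).Reachable
        ⟨⟨a, han⟩, hrS⟩ ⟨⟨k, hkn⟩, hmem⟩ := by
    intro k h1
    induction k, h1 using Nat.le_induction with
    | base => intro _ _ _; exact SimpleGraph.Reachable.refl _
    | succ k hk IH =>
      intro h2 hkn hmem
      have hkn' : k < n := by omega
      have hkS : (⟨k, hkn'⟩ : Fin n) ∈ S :=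
        (hpath _ (show k < m by omega)).2 ⟨hk, (show k ≤ b by omega)⟩
      have hadj0 : (doubleBroom n s).Adj ⟨k, hkn'⟩ ⟨k+1, hkn⟩ := by
        rw [dB_adj hn]; simp only [Fin.val_mk, true_and, and_true]; omega
      have hadj : ((doubleBroom n s).induce (S : Set (Fin n))).Adj
          ⟨⟨k, hkn'⟩, hkS⟩ ⟨⟨k+1, hkn⟩, hmem⟩ := hadj0
      exact (IH (by omega) hkn' hkS).trans hadj.reachable
  rw [SimpleGraph.connected_iff_exists_forall_reachable]
  refine ⟨⟨⟨a, han⟩, hrS⟩, ?_⟩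
  rintro ⟨⟨x, hxn⟩, hxS⟩
  have hxS' : (⟨x, hxn⟩ : Fin n) ∈ S := hxS
  by_cases hx1 : x < m
  · exact key x ((hpath _ hx1).1 hxS').1 ((hpath _ hx1).1 hxS').2 hxn hxS'
  · by_cases hx2 : x < m + s
    · have ha0 : a = 0 := hA _ (show m ≤ x by omega) hx2 hxS'
      have hadj0 : (doubleBroom n s).Adj ⟨a, han⟩ ⟨x, hxn⟩ := by
        rw [dB_adj hn]; simp only [Fin.val_mk, true_and, and_true]; omega
      have hadj : ((doubleBroom n s).induce (S : Set (Fin n))).Adj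
          ⟨⟨a, han⟩, hrS⟩ ⟨⟨x, hxn⟩, hxS⟩ := hadj0
      exact hadj.reachable
    · have hbm : b = m - 1 := hB _ (show m + s ≤ x by omega) hxS'
      have hmn : m - 1 < n := by omega
      have hmS : (⟨m-1, hmn⟩ : Fin n) ∈ S :=
        (hpath _ (show m - 1 < m by omega)).2 ⟨show a ≤ m-1 by omega, show m-1 ≤ b by omega⟩
      have hadj0 : (doubleBroom n s).Adj ⟨m-1, hmn⟩ ⟨x, hxn⟩ := by
        rw [dB_adj hn]; simp only [Fin.val_mk, true_and, and_true]; omega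
      have hadj : ((doubleBroom n s).induce (S : Set (Fin n))).Adj
          ⟨⟨m-1, hmn⟩, hmS⟩ ⟨⟨x, hxn⟩, hxS⟩ := hadj0
      exact (key (m-1) (by omega) (by omega) hmn hmS).trans hadj.reachable
end

section
variable {n s m : ℕ}

lemma mem_of_between (hm : 2 ≤ m) (hn : n = m + 2 * s)
    (S : Finset (Fin n))
    (hconn : ((doubleBroom n s).induce (S : Set (Fin n))).Connected)
    {u v : Fin n} (hu : u ∈ S) (hv : v ∈ S) (hvm : v.val < m)
    {c : ℕ} (h1 : u.val < c) (h2 : c < v.val) (hcn : c < n) :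
    (⟨c, hcn⟩ : Fin n) ∈ S := by
  obtain ⟨p⟩ := hconn.preconnected ⟨u, hu⟩ ⟨v, hv⟩
  have huT : (⟨u, hu⟩ : (S : Set (Fin n))) ∈
      {w : (S : Set (Fin n)) | (w : Fin n).val < c ∨ (m ≤ (w : Fin n).val ∧ (w : Fin n).val < m + s)} :=
    Or.inl h1
  have hvT : (⟨v, hv⟩ : (S : Set (Fin n))) ∉
      {w : (S : Set (Fin n)) | (w : Fin n).val < c ∨ (m ≤ (w : Fin n).val ∧ (w : Fin n).val < m + s)} := by
    simp only [Set.mem_setOf_eq]; omega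
  obtain ⟨d, hd, hfst, hsnd⟩ := p.exists_boundary_dart _ huT hvT
  have hadj' : (doubleBroom n s).Adj (d.fst : Fin n) (d.snd : Fin n) := d.adj
  rw [dB_adj hn] at hadj'
  simp only [Set.mem_setOf_eq] at hfst hsnd
  have hc : ((d.snd : (S : Set (Fin n))) : Fin n).val = c := by omega
  have : (⟨c, hcn⟩ : Fin n) = ((d.snd : (S : Set (Fin n))) : Fin n) := (Fin.ext hc).symm
  rw [this]
  exact (d.snd : (S : Set (Fin n))).2

lemma exists_neighbor (hm : 2 ≤ m) (hn : n = m + 2 * s)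
    (S : Finset (Fin n))
    (hconn : ((doubleBroom n s).induce (S : Set (Fin n))).Connected)
    {x y : Fin n} (hx : x ∈ S) (hy : y ∈ S) (hxy : x ≠ y) :
    ∃ w : Fin n, w ∈ S ∧ (doubleBroom n s).Adj x w := by
  obtain ⟨p⟩ := hconn.preconnected ⟨x, hx⟩ ⟨y, hy⟩
  have hxT : (⟨x, hx⟩ : (S : Set (Fin n))) ∈
      {w : (S : Set (Fin n)) | (w : Fin n) = x} := rfl
  have hyT : (⟨y, hy⟩ : (S : Set (Fin n))) ∉
      {w : (S : Set (Fin n)) | (w : Fin n) = x} := by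
    simp only [Set.mem_setOf_eq]
    exact fun h => hxy h.symm
  obtain ⟨d, hd, hfst, hsnd⟩ := p.exists_boundary_dart _ hxT hyT
  have hadj' : (doubleBroom n s).Adj (d.fst : Fin n) (d.snd : Fin n) := d.adj
  simp only [Set.mem_setOf_eq] at hfst
  refine ⟨(d.snd : (S : Set (Fin n))), (d.snd : (S : Set (Fin n))).2, ?_⟩
  rwa [hfst] at hadj'
end

open Finset in
def brTop (n s m : ℕ) : Finset (Finset (Fin n)) :=
  ((fIco n m (m+s)).powerset ×ˢ (fIco n (m+s) n).powerset).image
    (fun AB => fIco n 0 m ∪ AB.1 ∪ AB.2)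
open Finset in
def brLeft (n s m : ℕ) : Finset (Finset (Fin n)) :=
  ((Finset.range (m-1)) ×ˢ (fIco n m (m+s)).powerset).image
    (fun p => fIco n 0 (p.1+1) ∪ p.2)
open Finset in
def brRight (n s m : ℕ) : Finset (Finset (Fin n)) :=
  ((Finset.range (m-1)) ×ˢ (fIco n (m+s) n).powerset).image
    (fun p => fIco n (p.1+1) m ∪ p.2)
open Finset in
def brMid (n m : ℕ) : Finset (Finset (Fin n)) :=
  ((Finset.Icc 1 (m-2)).sigma (fun b => Finset.Icc 1 b)).image
    (fun p => fIco n p.2 (p.1+1))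
open Finset in
def brLeaf (n m : ℕ) : Finset (Finset (Fin n)) :=
  (fIco n m n).image (fun x => ({x} : Finset (Fin n)))

section
open Finset
variable {n s m : ℕ}

lemma mem_subtrees {S : Finset (Fin n)} :
    S ∈ subtrees (doubleBroom n s) ↔
      S.Nonempty ∧ ((doubleBroom n s).induce (S : Set (Fin n))).Connected := by
  simp [subtrees]

lemma brTop_sub (hm : 2 ≤ m) (hn : n = m + 2 * s) :
    brTop n s m ⊆ subtrees (doubleBroom n s) := by
  intro S hS
  simp only [brTop, mem_image, mem_product, mem_powerset] at hS
  obtain ⟨⟨A, B⟩, ⟨hA, hB⟩, rfl⟩ := hS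
  dsimp only at hA hB
  have hA' : ∀ x ∈ A, m ≤ x.val ∧ x.val < m + s := fun x hx => mem_fIco.1 (hA hx)
  have hB' : ∀ x ∈ B, m + s ≤ x.val := fun x hx => (mem_fIco.1 (hB hx)).1
  rw [mem_subtrees]
  constructor
  · exact ⟨⟨0, by omega⟩, by simp only [mem_union, mem_fIco]; left; left; exact ⟨by omega, by (try simp only [Fin.val_mk]); omega⟩⟩
  · apply connected_struct hm hn _ 0 (m-1) (by omega) (by omega)
    · intro x hxm
      simp only [mem_union, mem_fIco]
      constructor
      · intro _; omega
      · intro _; left; left; exact ⟨by omega, hxm⟩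
    · intro x _ _ _; rfl
    · intro x hx hxS
      rfl
  
lemma brLeft_sub (hm : 2 ≤ m) (hn : n = m + 2 * s) :
    brLeft n s m ⊆ subtrees (doubleBroom n s) := by
  intro S hS
  simp only [brLeft, mem_image, mem_product, mem_powerset, mem_range] at hS
  obtain ⟨⟨b, A⟩, ⟨hb, hA⟩, rfl⟩ := hS
  dsimp only at hb hA
  have hA' : ∀ x ∈ A, m ≤ x.val ∧ x.val < m + s := fun x hx => mem_fIco.1 (hA hx)
  rw [mem_subtrees]
  constructor
  · exact ⟨⟨0, by omega⟩, by simp only [mem_union, mem_fIco]; left; exact ⟨by omega, by (try simp only [Fin.val_mk]); omega⟩⟩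
  · apply connected_struct hm hn _ 0 b (by omega) (by omega)
    · intro x hxm
      simp only [mem_union, mem_fIco]
      constructor
      · intro h
        rcases h with h | h
        · omega
        · have := hA' _ h; omega
      · intro h; left; omega
    · intro x _ _ _; rfl
    · intro x hx hxS
      exfalso
      simp only [mem_union, mem_fIco] at hxS
      rcases hxS with h | h
      · omega
      · have := hA' _ h; omega

lemma brRight_sub (hm : 2 ≤ m) (hn : n = m + 2 * s) :
    brRight n s m ⊆ subtrees (doubleBroom n s) := by
  intro S hS
  simp only [brRight, mem_image, mem_product, mem_powerset, mem_range] at hS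
  obtain ⟨⟨a, B⟩, ⟨ha, hB⟩, rfl⟩ := hS
  dsimp only at ha hB
  have hB' : ∀ x ∈ B, m + s ≤ x.val ∧ x.val < n := fun x hx => mem_fIco.1 (hB hx)
  rw [mem_subtrees]
  constructor
  · exact ⟨⟨a+1, by omega⟩, by simp only [mem_union, mem_fIco]; left; exact ⟨by (try simp only [Fin.val_mk]); omega, by (try simp only [Fin.val_mk]); omega⟩⟩
  · apply connected_struct hm hn _ (a+1) (m-1) (by omega) (by omega)
    · intro x hxm
      simp only [mem_union, mem_fIco]
      constructor
      · intro h
        rcases h with h | h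
        · omega
        · have := hB' _ h; omega
      · intro h; left; omega
    · intro x hx1 hx2 hxS
      exfalso
      simp only [mem_union, mem_fIco] at hxS
      rcases hxS with h | h
      · omega
      · have := hB' _ h; omega
    · intro x hx hxS; rfl

lemma brMid_sub (hm : 2 ≤ m) (hn : n = m + 2 * s) :
    brMid n m ⊆ subtrees (doubleBroom n s) := by
  intro S hS
  simp only [brMid, mem_image, Finset.mem_sigma, mem_Icc] at hS
  obtain ⟨⟨b, a⟩, ⟨hb, ha⟩, rfl⟩ := hS
  dsimp only at hb ha
  rw [mem_subtrees]
  constructor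
  · exact ⟨⟨a, by omega⟩, by simp only [mem_fIco]; exact ⟨by (try simp only [Fin.val_mk]); omega, by (try simp only [Fin.val_mk]); omega⟩⟩
  · apply connected_struct hm hn _ a b (by omega) (by omega)
    · intro x hxm
      simp only [mem_fIco]
      omega
    · intro x hx1 hx2 hxS
      exfalso; simp only [mem_fIco] at hxS; omega
    · intro x hx hxS
      exfalso; simp only [mem_fIco] at hxS; omega

lemma brLeaf_sub (hm : 2 ≤ m) (hn : n = m + 2 * s) :
    brLeaf n m ⊆ subtrees (doubleBroom n s) := by
  intro S hS
  simp only [brLeaf, mem_image] at hS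
  obtain ⟨x, hx, rfl⟩ := hS
  rw [mem_subtrees]
  refine ⟨⟨x, mem_singleton_self x⟩, ?_⟩
  rw [SimpleGraph.connected_iff_exists_forall_reachable]
  refine ⟨⟨x, by simp⟩, ?_⟩
  rintro ⟨w, hw⟩
  have : w = x := by simpa using hw
  subst this
  exact SimpleGraph.Reachable.refl _
end

section
open Finset
variable {n s m : ℕ}

lemma subtrees_sub (hm : 2 ≤ m) (hn : n = m + 2 * s)
    {S : Finset (Fin n)} (hS : S ∈ subtrees (doubleBroom n s)) :
    S ∈ brTop n s m ∪ brLeft n s m ∪ brRight n s m ∪ brMid n m ∪ brLeaf n m := by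
  rw [mem_subtrees] at hS
  obtain ⟨hne, hconn⟩ := hS
  simp only [mem_union]
  by_cases hP : ∃ x ∈ S, x.val < m
  case neg =>
    push_neg at hP
    obtain ⟨x, hx⟩ := hne
    have hxm : m ≤ x.val := hP x hx
    have hsing : S = {x} := by
      apply Finset.eq_singleton_iff_unique_mem.2 ⟨hx, ?_⟩
      intro y hy
      by_contra hne'
      obtain ⟨w, hw, hadj⟩ := exists_neighbor hm hn S hconn hy hx hne'
      have hym : m ≤ y.val := hP y hy
      have hwm : m ≤ w.val := hP w hw
      rw [dB_adj hn] at hadj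
      omega
    right
    rw [hsing]
    simp only [brLeaf, mem_image]
    exact ⟨x, mem_fIco.2 ⟨hxm, x.isLt⟩, rfl⟩
  case pos =>
    obtain ⟨x0, hx0S, hx0m⟩ := hP
    have hPSne : ((S.filter (fun x : Fin n => x.val < m)).image Fin.val).Nonempty :=
      ⟨x0.val, mem_image_of_mem _ (mem_filter.2 ⟨hx0S, hx0m⟩)⟩
    set a := ((S.filter (fun x : Fin n => x.val < m)).image Fin.val).min' hPSne with hadef
    set b := ((S.filter (fun x : Fin n => x.val < m)).image Fin.val).max' hPSne with hbdef
    obtain ⟨xa, hxaPS, hxa⟩ := mem_image.1 (min'_mem _ hPSne)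
    obtain ⟨xb, hxbPS, hxb⟩ := mem_image.1 (max'_mem _ hPSne)
    rw [mem_filter] at hxaPS hxbPS
    rw [← hadef] at hxa
    rw [← hbdef] at hxb
    have hab : a ≤ b := min'_le _ _ (max'_mem _ hPSne)
    have hbm : b < m := by rw [← hxb]; exact hxbPS.2
    have ham : a < m := by omega
    have hbounds : ∀ x, x ∈ S → x.val < m → a ≤ x.val ∧ x.val ≤ b := by
      intro x hx h1
      have hmem : x.val ∈ (S.filter (fun x : Fin n => x.val < m)).image Fin.val :=
        mem_image_of_mem _ (mem_filter.2 ⟨hx, h1⟩)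
      exact ⟨min'_le _ _ hmem, le_max' _ _ hmem⟩
    have hfill : ∀ c, a ≤ c → c ≤ b → ∀ hcn : c < n, (⟨c, hcn⟩ : Fin n) ∈ S := by
      intro c h1 h2 hcn
      rcases eq_or_lt_of_le h1 with h1' | h1'
      · have : (⟨c, hcn⟩ : Fin n) = xa := Fin.ext (by simp only [Fin.val_mk]; omega)
        rw [this]; exact hxaPS.1
      rcases eq_or_lt_of_le h2 with h2' | h2'
      · have : (⟨c, hcn⟩ : Fin n) = xb := Fin.ext (by simp only [Fin.val_mk]; omega)
        rw [this]; exact hxbPS.1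
      · exact mem_of_between hm hn S hconn hxaPS.1 hxbPS.1 hxbPS.2
          (by omega) (by omega) hcn
    have hfill' : ∀ x : Fin n, a ≤ x.val → x.val ≤ b → x ∈ S := by
      intro x h1 h2
      have := hfill x.val h1 h2 x.isLt
      rwa [Fin.eta] at this
    have hA0 : (∃ x ∈ S, m ≤ x.val ∧ x.val < m + s) → a = 0 := by
      rintro ⟨x, hxS, hx1, hx2⟩
      have hne' : x ≠ xa := fun h => by rw [h] at hx1; omega
      obtain ⟨w, hwS, hadj⟩ := exists_neighbor hm hn S hconn hxS hxaPS.1 hne'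
      rw [dB_adj hn] at hadj
      have hw0 : w.val = 0 := by omega
      have := (hbounds w hwS (by omega)).1
      omega
    have hB0 : (∃ x ∈ S, m + s ≤ x.val) → b = m - 1 := by
      rintro ⟨x, hxS, hx1⟩
      have hne' : x ≠ xa := fun h => by rw [h] at hx1; omega
      obtain ⟨w, hwS, hadj⟩ := exists_neighbor hm hn S hconn hxS hxaPS.1 hne'
      rw [dB_adj hn] at hadj
      have hw0 : w.val = m - 1 := by omega
      have := (hbounds w hwS (by omega)).2
      omega
    by_cases haz : a = 0
    · by_cases hbz : b = m - 1
      · left; left; left; left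
        simp only [brTop, mem_image, mem_product, mem_powerset]
        refine ⟨(S.filter (fun x : Fin n => m ≤ x.val ∧ x.val < m + s),
                 S.filter (fun x : Fin n => m + s ≤ x.val)), ⟨?_, ?_⟩, ?_⟩
        · intro x hx; rw [mem_filter] at hx; exact mem_fIco.2 hx.2
        · intro x hx; rw [mem_filter] at hx; exact mem_fIco.2 ⟨hx.2, x.isLt⟩
        · ext x
          simp only [mem_union, mem_fIco, mem_filter]
          constructor
          · rintro ((h | h) | h)
            · exact hfill' x (by omega) (by omega)
            · exact h.1
            · exact h.1
          · intro hx
            by_cases h1 : x.val < m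
            · left; left; omega
            · by_cases h2 : x.val < m + s
              · left; right; exact ⟨hx, by omega, h2⟩
              · right; exact ⟨hx, by omega⟩
      · left; left; left; right
        simp only [brLeft, mem_image, mem_product, mem_powerset, mem_range]
        refine ⟨(b, S.filter (fun x : Fin n => m ≤ x.val ∧ x.val < m + s)), ⟨?_, ?_⟩, ?_⟩
        · dsimp only; omega
        · intro x hx; rw [mem_filter] at hx; exact mem_fIco.2 hx.2
        · dsimp only
          ext x
          simp only [mem_union, mem_fIco, mem_filter]
          constructor
          · rintro (h | h)
            · exact hfill' x (by omega) (by omega)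
            · exact h.1
          · intro hx
            by_cases h1 : x.val < m
            · have := hbounds x hx h1; left; omega
            · by_cases h2 : x.val < m + s
              · right; exact ⟨hx, by omega, h2⟩
              · exact absurd (hB0 ⟨x, hx, by omega⟩) hbz
    · by_cases hbz : b = m - 1
      · left; left; right
        simp only [brRight, mem_image, mem_product, mem_powerset, mem_range]
        refine ⟨(a - 1, S.filter (fun x : Fin n => m + s ≤ x.val)), ⟨?_, ?_⟩, ?_⟩
        · dsimp only; omega
        · intro x hx; rw [mem_filter] at hx; exact mem_fIco.2 ⟨hx.2, x.isLt⟩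
        · dsimp only
          ext x
          simp only [mem_union, mem_fIco, mem_filter]
          constructor
          · rintro (h | h)
            · exact hfill' x (by omega) (by omega)
            · exact h.1
          · intro hx
            by_cases h1 : x.val < m
            · have := hbounds x hx h1; left; omega
            · by_cases h2 : x.val < m + s
              · exact absurd (hA0 ⟨x, hx, by omega, h2⟩) haz
              · right; exact ⟨hx, by omega⟩
      · left; right
        simp only [brMid, mem_image, Finset.mem_sigma, mem_Icc]
        refine ⟨⟨b, a⟩, ⟨?_, ?_⟩, ?_⟩
        · dsimp only; omega
        · dsimp only; omega
        · dsimp only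
          ext x
          simp only [mem_fIco]
          constructor
          · intro h; exact hfill' x (by omega) (by omega)
          · intro hx
            by_cases h1 : x.val < m
            · have := hbounds x hx h1; omega
            · by_cases h2 : x.val < m + s
              · exact absurd (hA0 ⟨x, hx, by omega, h2⟩) haz
              · exact absurd (hB0 ⟨x, hx, by omega⟩) hbz
end

section
open Finset
variable {n s m : ℕ}

lemma subtrees_eq (hm : 2 ≤ m) (hn : n = m + 2 * s) :
    subtrees (doubleBroom n s) =
      brTop n s m ∪ brLeft n s m ∪ brRight n s m ∪ brMid n m ∪ brLeaf n m := by
  apply Finset.Subset.antisymm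
  · intro S hS; exact subtrees_sub hm hn hS
  · intro S hS
    simp only [mem_union] at hS
    rcases hS with ((((h | h) | h) | h) | h)
    · exact brTop_sub hm hn h
    · exact brLeft_sub hm hn h
    · exact brRight_sub hm hn h
    · exact brMid_sub hm hn h
    · exact brLeaf_sub hm hn h

lemma brTop_flag (hm : 2 ≤ m) (hn : n = m + 2 * s) {S : Finset (Fin n)}
    (h : S ∈ brTop n s m) :
    (⟨0, by omega⟩ : Fin n) ∈ S ∧ (⟨m - 1, by omega⟩ : Fin n) ∈ S := by
  simp only [brTop, mem_image, mem_product, mem_powerset] at h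
  obtain ⟨⟨A, B⟩, ⟨hA, hB⟩, rfl⟩ := h
  constructor
  · simp only [mem_union]; left; left
    simp only [mem_fIco, Fin.val_mk]; omega
  · simp only [mem_union]; left; left
    simp only [mem_fIco, Fin.val_mk]; omega

lemma brLeft_flag (hm : 2 ≤ m) (hn : n = m + 2 * s) {S : Finset (Fin n)}
    (h : S ∈ brLeft n s m) :
    (⟨0, by omega⟩ : Fin n) ∈ S ∧ (⟨m - 1, by omega⟩ : Fin n) ∉ S := by
  simp only [brLeft, mem_image, mem_product, mem_powerset, mem_range] at h
  obtain ⟨⟨b, A⟩, ⟨hb, hA⟩, rfl⟩ := h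
  dsimp only at hb hA ⊢
  have hA' : ∀ x ∈ A, m ≤ x.val := fun x hx => (mem_fIco.1 (hA hx)).1
  constructor
  · simp only [mem_union]; left
    simp only [mem_fIco, Fin.val_mk]; omega
  · intro hc
    simp only [mem_union] at hc
    rcases hc with hc | hc
    · simp only [mem_fIco, Fin.val_mk] at hc; omega
    · have := hA' _ hc; simp only [Fin.val_mk] at this; omega

lemma brRight_flag (hm : 2 ≤ m) (hn : n = m + 2 * s) {S : Finset (Fin n)}
    (h : S ∈ brRight n s m) :
    (⟨0, by omega⟩ : Fin n) ∉ S ∧ (⟨m - 1, by omega⟩ : Fin n) ∈ S := by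
  simp only [brRight, mem_image, mem_product, mem_powerset, mem_range] at h
  obtain ⟨⟨a, B⟩, ⟨ha, hB⟩, rfl⟩ := h
  dsimp only at ha hB ⊢
  have hB' : ∀ x ∈ B, m + s ≤ x.val := fun x hx => (mem_fIco.1 (hB hx)).1
  constructor
  · intro hc
    simp only [mem_union] at hc
    rcases hc with hc | hc
    · simp only [mem_fIco, Fin.val_mk] at hc; omega
    · have := hB' _ hc; simp only [Fin.val_mk] at this; omega
  · simp only [mem_union]; left
    simp only [mem_fIco, Fin.val_mk]; omega

lemma brMid_flag (hm : 2 ≤ m) (hn : n = m + 2 * s) {S : Finset (Fin n)}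
    (h : S ∈ brMid n m) :
    (⟨0, by omega⟩ : Fin n) ∉ S ∧ (⟨m - 1, by omega⟩ : Fin n) ∉ S ∧
      ∃ x ∈ S, x.val < m := by
  simp only [brMid, mem_image, Finset.mem_sigma, mem_Icc] at h
  obtain ⟨⟨b, a⟩, ⟨hb, ha⟩, rfl⟩ := h
  dsimp only at hb ha ⊢
  refine ⟨?_, ?_, ?_⟩
  · intro hc; simp only [mem_fIco, Fin.val_mk] at hc; omega
  · intro hc; simp only [mem_fIco, Fin.val_mk] at hc; omega
  · exact ⟨⟨a, by omega⟩, by simp only [mem_fIco, Fin.val_mk]; omega,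
      by simp only [Fin.val_mk]; omega⟩

lemma brLeaf_flag (hm : 2 ≤ m) (hn : n = m + 2 * s) {S : Finset (Fin n)}
    (h : S ∈ brLeaf n m) : ∀ x ∈ S, m ≤ x.val := by
  simp only [brLeaf, mem_image] at h
  obtain ⟨y, hy, rfl⟩ := h
  intro x hx
  rw [Finset.mem_singleton] at hx
  subst hx
  exact (mem_fIco.1 hy).1
end

section
open Finset
variable {n s m : ℕ}

lemma card_brTop (hm : 2 ≤ m) (hn : n = m + 2 * s) :
    (brTop n s m).card = 2 ^ (2 * s) := by
  rw [brTop, card_image_of_injOn, card_product, card_powerset, card_powerset,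
    card_fIco (by omega), card_fIco (le_refl n)]
  · have h1 : m + s - m = s := by omega
    have h2 : n - (m + s) = s := by omega
    rw [h1, h2, ← pow_add]
    congr 1; omega
  · rintro ⟨A, B⟩ hp ⟨C, D⟩ hq heq
    simp only [coe_product, Set.mem_prod, mem_coe, mem_powerset] at hp hq
    obtain ⟨hA, hB⟩ := hp
    obtain ⟨hC, hD⟩ := hq
    dsimp only at heq hA hB hC hD
    have e1 : A = C := by
      ext x
      constructor
      · intro hx
        have h1 := mem_fIco.1 (hA hx)
        have : x ∈ fIco n 0 m ∪ C ∪ D := by rw [← heq]; simp [hx]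
        simp only [mem_union, mem_fIco] at this
        rcases this with (h | h) | h
        · omega
        · exact h
        · have := mem_fIco.1 (hD h); omega
      · intro hx
        have h1 := mem_fIco.1 (hC hx)
        have : x ∈ fIco n 0 m ∪ A ∪ B := by rw [heq]; simp [hx]
        simp only [mem_union, mem_fIco] at this
        rcases this with (h | h) | h
        · omega
        · exact h
        · have := mem_fIco.1 (hB h); omega
    have e2 : B = D := by
      ext x
      constructor
      · intro hx
        have h1 := mem_fIco.1 (hB hx)
        have : x ∈ fIco n 0 m ∪ C ∪ D := by rw [← heq]; simp [hx]
        simp only [mem_union, mem_fIco] at this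
        rcases this with (h | h) | h
        · omega
        · have := mem_fIco.1 (hC h); omega
        · exact h
      · intro hx
        have h1 := mem_fIco.1 (hD hx)
        have : x ∈ fIco n 0 m ∪ A ∪ B := by rw [heq]; simp [hx]
        simp only [mem_union, mem_fIco] at this
        rcases this with (h | h) | h
        · omega
        · have := mem_fIco.1 (hA h); omega
        · exact h
    rw [Prod.mk.injEq]
    exact ⟨e1, e2⟩

lemma card_brLeft (hm : 2 ≤ m) (hn : n = m + 2 * s) :
    (brLeft n s m).card = (m - 1) * 2 ^ s := by
  rw [brLeft, card_image_of_injOn, card_product, card_powerset, card_range,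
    card_fIco (by omega)]
  · have h1 : m + s - m = s := by omega
    rw [h1]
  · rintro ⟨b, A⟩ hp ⟨c, C⟩ hq heq
    simp only [coe_product, Set.mem_prod, mem_coe, mem_powerset, mem_range] at hp hq
    obtain ⟨hb, hA⟩ := hp
    obtain ⟨hc, hC⟩ := hq
    dsimp only at heq hb hA hc hC
    have hbc : b = c := by
      have hbn : b < n := by omega
      have hcn : c < n := by omega
      have m1 : (⟨b, hbn⟩ : Fin n) ∈ fIco n 0 (c+1) ∪ C := by
        rw [← heq]; simp only [mem_union, mem_fIco, Fin.val_mk]; left; omega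
      have m2 : (⟨c, hcn⟩ : Fin n) ∈ fIco n 0 (b+1) ∪ A := by
        rw [heq]; simp only [mem_union, mem_fIco, Fin.val_mk]; left; omega
      simp only [mem_union, mem_fIco, Fin.val_mk] at m1 m2
      rcases m1 with h | h
      · rcases m2 with h' | h'
        · omega
        · have := mem_fIco.1 (hA h'); simp only [Fin.val_mk] at this; omega
      · have := mem_fIco.1 (hC h); simp only [Fin.val_mk] at this; omega
    subst hbc
    have e1 : A = C := by
      ext x
      constructor
      · intro hx
        have h1 := mem_fIco.1 (hA hx)
        have : x ∈ fIco n 0 (b+1) ∪ C := by rw [← heq]; simp [hx]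
        simp only [mem_union, mem_fIco] at this
        rcases this with h | h
        · omega
        · exact h
      · intro hx
        have h1 := mem_fIco.1 (hC hx)
        have : x ∈ fIco n 0 (b+1) ∪ A := by rw [heq]; simp [hx]
        simp only [mem_union, mem_fIco] at this
        rcases this with h | h
        · omega
        · exact h
    rw [Prod.mk.injEq]
    exact ⟨rfl, e1⟩

lemma card_brRight (hm : 2 ≤ m) (hn : n = m + 2 * s) :
    (brRight n s m).card = (m - 1) * 2 ^ s := by
  rw [brRight, card_image_of_injOn, card_product, card_powerset, card_range,
    card_fIco (le_refl n)]
  · have h1 : n - (m + s) = s := by omega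
    rw [h1]
  · rintro ⟨a, A⟩ hp ⟨c, C⟩ hq heq
    simp only [coe_product, Set.mem_prod, mem_coe, mem_powerset, mem_range] at hp hq
    obtain ⟨ha, hA⟩ := hp
    obtain ⟨hc, hC⟩ := hq
    dsimp only at heq ha hA hc hC
    have hac : a = c := by
      have han : a + 1 < n := by omega
      have hcn : c + 1 < n := by omega
      have m1 : (⟨a+1, han⟩ : Fin n) ∈ fIco n (c+1) m ∪ C := by
        rw [← heq]; simp only [mem_union, mem_fIco, Fin.val_mk]; left; omega
      have m2 : (⟨c+1, hcn⟩ : Fin n) ∈ fIco n (a+1) m ∪ A := by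
        rw [heq]; simp only [mem_union, mem_fIco, Fin.val_mk]; left; omega
      simp only [mem_union, mem_fIco, Fin.val_mk] at m1 m2
      rcases m1 with h | h
      · rcases m2 with h' | h'
        · omega
        · have := mem_fIco.1 (hA h'); simp only [Fin.val_mk] at this; omega
      · have := mem_fIco.1 (hC h); simp only [Fin.val_mk] at this; omega
    subst hac
    have e1 : A = C := by
      ext x
      constructor
      · intro hx
        have h1 := mem_fIco.1 (hA hx)
        have : x ∈ fIco n (a+1) m ∪ C := by rw [← heq]; simp [hx]
        simp only [mem_union, mem_fIco] at this
        rcases this with h | h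
        · omega
        · exact h
      · intro hx
        have h1 := mem_fIco.1 (hC hx)
        have : x ∈ fIco n (a+1) m ∪ A := by rw [heq]; simp [hx]
        simp only [mem_union, mem_fIco] at this
        rcases this with h | h
        · omega
        · exact h
    rw [Prod.mk.injEq]
    exact ⟨rfl, e1⟩

lemma card_brMid (hm : 2 ≤ m) (hn : n = m + 2 * s) :
    (brMid n m).card = (m - 1).choose 2 := by
  rw [brMid, card_image_of_injOn]
  · rw [Finset.card_sigma]
    have h1 : ∀ b ∈ Finset.Icc 1 (m-2), (Finset.Icc 1 b).card = b := by
      intro b _; rw [Nat.card_Icc]; omega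
    rw [Finset.sum_congr rfl h1]
    have h2 : Finset.range (m-1) = insert 0 (Finset.Icc 1 (m-2)) := by
      ext x; simp only [mem_range, Finset.mem_insert, mem_Icc]; omega
    have h3 : (∑ b ∈ Finset.Icc 1 (m-2), b) * 2 = (m-1) * (m-2) := by
      have h4 := Finset.sum_range_id_mul_two (m-1)
      rw [h2, Finset.sum_insert (by simp)] at h4
      rw [show m - 1 - 1 = m - 2 by omega] at h4
      simpa using h4
    have h5 : (m-1).choose 2 * 2 = (m-1) * (m-2) := by
      have h6 : m - 1 - 1 = m - 2 := by omega
      have hdvd : 2 ∣ (m-1) * (m-2) := by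
        have : Even ((m-1) * (m-2)) := by
          rcases Nat.even_or_odd (m-1) with h | h
          · exact h.mul_right _
          · rcases Nat.even_or_odd (m-2) with h' | h'
            · exact h'.mul_left _
            · exfalso
              obtain ⟨k, hk⟩ := h
              obtain ⟨l, hl⟩ := h'
              omega
        exact this.two_dvd
      rw [Nat.choose_two_right, h6, Nat.div_mul_cancel hdvd]
    exact Nat.eq_of_mul_eq_mul_right (by norm_num) (h3.trans h5.symm)
  · rintro ⟨b, a⟩ hp ⟨c, d⟩ hq heq
    simp only [coe_sigma, Set.mem_sigma_iff, mem_coe, mem_Icc] at hp hq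
    obtain ⟨hb, ha⟩ := hp
    obtain ⟨hc, hd⟩ := hq
    dsimp only at heq hb ha hc hd
    have han : a < n := by omega
    have hbn : b < n := by omega
    have hcn : c < n := by omega
    have hdn : d < n := by omega
    have m1 : (⟨a, han⟩ : Fin n) ∈ fIco n d (c+1) := by
      rw [← heq]; simp only [mem_fIco, Fin.val_mk]; omega
    have m2 : (⟨b, hbn⟩ : Fin n) ∈ fIco n d (c+1) := by
      rw [← heq]; simp only [mem_fIco, Fin.val_mk]; omega
    have m3 : (⟨d, hdn⟩ : Fin n) ∈ fIco n a (b+1) := by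
      rw [heq]; simp only [mem_fIco, Fin.val_mk]; omega
    have m4 : (⟨c, hcn⟩ : Fin n) ∈ fIco n a (b+1) := by
      rw [heq]; simp only [mem_fIco, Fin.val_mk]; omega
    simp only [mem_fIco, Fin.val_mk] at m1 m2 m3 m4
    have : b = c := by omega
    subst this
    have : a = d := by omega
    subst this
    rfl

lemma card_brLeaf (hm : 2 ≤ m) (hn : n = m + 2 * s) :
    (brLeaf n m).card = 2 * s := by
  rw [brLeaf, card_image_of_injOn, card_fIco (le_refl n)]
  · omega
  · intro x _ y _ h
    exact Finset.singleton_injective h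
end

section
open Finset
theorem stmt11 (n s : ℕ) (hs : 1 ≤ s) (hn : 2 * s + 2 ≤ n) :
    (subtrees (doubleBroom n s)).card =
      2 ^ (2 * s) + 2 ^ (s + 1) * (n - 2 * s - 1) + (n - 2 * s - 1).choose 2 + 2 * s := by
  have hm : 2 ≤ n - 2 * s := by omega
  set m := n - 2 * s with hmdef
  have hn' : n = m + 2 * s := by omega
  rw [subtrees_eq hm hn']
  have d12 : Disjoint (brTop n s m) (brLeft n s m) := by
    rw [Finset.disjoint_left]; intro S h1 h2
    exact (brLeft_flag hm hn' h2).2 (brTop_flag hm hn' h1).2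
  have d13 : Disjoint (brTop n s m) (brRight n s m) := by
    rw [Finset.disjoint_left]; intro S h1 h2
    exact (brRight_flag hm hn' h2).1 (brTop_flag hm hn' h1).1
  have d14 : Disjoint (brTop n s m) (brMid n m) := by
    rw [Finset.disjoint_left]; intro S h1 h2
    exact (brMid_flag hm hn' h2).1 (brTop_flag hm hn' h1).1
  have d15 : Disjoint (brTop n s m) (brLeaf n m) := by
    rw [Finset.disjoint_left]; intro S h1 h2
    have := brLeaf_flag hm hn' h2 _ (brTop_flag hm hn' h1).1
    simp only [Fin.val_mk] at this; omega
  have d23 : Disjoint (brLeft n s m) (brRight n s m) := by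
    rw [Finset.disjoint_left]; intro S h1 h2
    exact (brRight_flag hm hn' h2).1 (brLeft_flag hm hn' h1).1
  have d24 : Disjoint (brLeft n s m) (brMid n m) := by
    rw [Finset.disjoint_left]; intro S h1 h2
    exact (brMid_flag hm hn' h2).1 (brLeft_flag hm hn' h1).1
  have d25 : Disjoint (brLeft n s m) (brLeaf n m) := by
    rw [Finset.disjoint_left]; intro S h1 h2
    have := brLeaf_flag hm hn' h2 _ (brLeft_flag hm hn' h1).1
    simp only [Fin.val_mk] at this; omega
  have d34 : Disjoint (brRight n s m) (brMid n m) := by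
    rw [Finset.disjoint_left]; intro S h1 h2
    exact (brMid_flag hm hn' h2).2.1 (brRight_flag hm hn' h1).2
  have d35 : Disjoint (brRight n s m) (brLeaf n m) := by
    rw [Finset.disjoint_left]; intro S h1 h2
    have := brLeaf_flag hm hn' h2 _ (brRight_flag hm hn' h1).2
    simp only [Fin.val_mk] at this; omega
  have d45 : Disjoint (brMid n m) (brLeaf n m) := by
    rw [Finset.disjoint_left]; intro S h1 h2
    obtain ⟨x, hxS, hxm⟩ := (brMid_flag hm hn' h1).2.2
    have := brLeaf_flag hm hn' h2 x hxS
    omega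
  have D4 : Disjoint (brTop n s m ∪ brLeft n s m ∪ brRight n s m ∪ brMid n m) (brLeaf n m) := by
    simp only [Finset.disjoint_union_left]
    exact ⟨⟨⟨d15, d25⟩, d35⟩, d45⟩
  have D3 : Disjoint (brTop n s m ∪ brLeft n s m ∪ brRight n s m) (brMid n m) := by
    simp only [Finset.disjoint_union_left]
    exact ⟨⟨d14, d24⟩, d34⟩
  have D2 : Disjoint (brTop n s m ∪ brLeft n s m) (brRight n s m) := by
    simp only [Finset.disjoint_union_left]
    exact ⟨d13, d23⟩
  rw [card_union_of_disjoint D4, card_union_of_disjoint D3, card_union_of_disjoint D2,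
    card_union_of_disjoint d12, card_brTop hm hn', card_brLeft hm hn', card_brRight hm hn',
    card_brMid hm hn', card_brLeaf hm hn']
  have e : 2 ^ (s + 1) = 2 * 2 ^ s := by rw [pow_succ]; ring
  rw [e]
  ring
end
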